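/- The vector s = e₁⊗e₁ + e₂⊗e₂ + e₃⊗e₃ ∈ ℂ³⊗ℂ³ spans a trivial D(D₃)-module: for all g, h ∈ D₃, Δ(g h*)·s = ε(g h*)·s, where ε(g h*) = 1 if h = e and 0 otherwise. -/

import Mathlib

open Matrix
open scoped Kronecker

noncomputable section

/-- π(σ): 3×3 matrix with rows (0,1,0),(0,0,1),(1,0,0). -/
def Smat : Matrix (Fin 3) (Fin 3) ℂ := !![0,1,0; 0,0,1; 1,0,0]

/-- π(τ): 3×3 matrix with rows (1,0,0),(0,0,1),(0,1,0). -/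
def Tmat : Matrix (Fin 3) (Fin 3) ℂ := !![1,0,0; 0,0,1; 0,1,0]

/-- The representation π_{(3,+)} on group elements of D₃ = DihedralGroup 3,
extended multiplicatively from π(σ) = Smat, π(τ) = Tmat.
Here `DihedralGroup.r i` = σ^i and `DihedralGroup.sr i` = τσ^i. -/
def pig : DihedralGroup 3 → Matrix (Fin 3) (Fin 3) ℂ
  | DihedralGroup.r i => Smat ^ i.val
  | DihedralGroup.sr i => Tmat * Smat ^ i.val

/-- The representation π_{(3,+)} on dual elements: π((σ^i)*) = 0 and
π((σ^i τ)*) = E^{i+1}_{i+1}.  Since σ^i τ = `DihedralGroup.sr (-i)`, the dual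
of `sr j` acts as the matrix unit at position (-j).val. -/
def pidual : DihedralGroup 3 → Matrix (Fin 3) (Fin 3) ℂ
  | DihedralGroup.r _ => 0
  | DihedralGroup.sr j =>
      Matrix.single ⟨(-j).val, ZMod.val_lt _⟩ ⟨(-j).val, ZMod.val_lt _⟩ 1

/-- The coproduct action Δ(g h*) on ℂ³⊗ℂ³. -/
def copr (g h : DihedralGroup 3) : Matrix (Fin 3 × Fin 3) (Fin 3 × Fin 3) ℂ :=
  ∑ k : DihedralGroup 3, (pig g * pidual (k⁻¹ * h)) ⊗ₖ (pig g * pidual k)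

/-- The local two-site Hamiltonian 𝔥 = Σ_γ i(E^{γ(1)}_{γ(2)} ⊗ E^{γ(2)}_{γ(3)}
− E^{γ(2)}_{γ(3)} ⊗ E^{γ(1)}_{γ(2)}), summed over permutations γ of {1,2,3}. -/
def hloc : Matrix (Fin 3 × Fin 3) (Fin 3 × Fin 3) ℂ :=
  ∑ γ : Equiv.Perm (Fin 3),
    Complex.I •
      ((Matrix.single (γ 0) (γ 1) (1 : ℂ)) ⊗ₖ (Matrix.single (γ 1) (γ 2) (1 : ℂ))
        - (Matrix.single (γ 1) (γ 2) (1 : ℂ)) ⊗ₖ (Matrix.single (γ 0) (γ 1) (1 : ℂ)))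

/-- The vector s = e₁⊗e₁ + e₂⊗e₂ + e₃⊗e₃ ∈ ℂ³⊗ℂ³. -/
def svec : Fin 3 × Fin 3 → ℂ := fun p => if p.1 = p.2 then 1 else 0

/- ### Auxiliary machinery -/

/-- Explicit equivalence used to expand sums over `DihedralGroup 3`. -/
def myEquiv : (ZMod 3) ⊕ (ZMod 3) ≃ DihedralGroup 3 where
  toFun x := match x with | .inl i => .r i | .inr i => .sr i
  invFun g := match g with | .r i => .inl i | .sr i => .inr i
  left_inv := by rintro (i|i) <;> rfl
  right_inv := by rintro (i|i) <;> rfl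

lemma sum_dihedral {M : Type*} [AddCommMonoid M] (f : DihedralGroup 3 → M) :
    ∑ k : DihedralGroup 3, f k =
      (f (.r 0) + f (.r 1) + f (.r 2)) + (f (.sr 0) + f (.sr 1) + f (.sr 2)) := by
  rw [← Fintype.sum_equiv myEquiv (fun x => f (myEquiv x)) f (fun _ => rfl),
    Fintype.sum_sum_type]
  show (∑ i : Fin 3, f (.r i)) + (∑ i : Fin 3, f (.sr i)) = _
  rw [Fin.sum_univ_three, Fin.sum_univ_three]
  rfl

lemma zmod3_cases : ∀ i : ZMod 3, i = 0 ∨ i = 1 ∨ i = 2 := by decide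

lemma kron_mulVec (A B : Matrix (Fin 3) (Fin 3) ℂ) :
    (A ⊗ₖ B).mulVec svec = fun p => (A * Bᵀ) p.1 p.2 := by
  funext p
  simp [mulVec, dotProduct, Fintype.sum_prod_type, svec, mul_apply, mul_ite, mul_comm]

lemma pd0 : pidual (.sr 0) = !![1,0,0;0,0,0;0,0,0] := by
  ext i j; fin_cases i <;> fin_cases j <;> rfl
lemma pd1 : pidual (.sr 1) = !![0,0,0;0,0,0;0,0,1] := by
  ext i j; fin_cases i <;> fin_cases j <;> rfl
lemma pd2 : pidual (.sr 2) = !![0,0,0;0,1,0;0,0,0] := by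
  ext i j; fin_cases i <;> fin_cases j <;> rfl

lemma hSt : (!![0,1,0; 0,0,1; 1,0,0] : Matrix (Fin 3) (Fin 3) ℂ)ᵀ = !![0,0,1;1,0,0;0,1,0] := by
  ext i j; fin_cases i <;> fin_cases j <;> rfl
lemma hTt : (!![1,0,0; 0,0,1; 0,1,0] : Matrix (Fin 3) (Fin 3) ℂ)ᵀ = !![1,0,0; 0,0,1; 0,1,0] := by
  ext i j; fin_cases i <;> fin_cases j <;> rfl

lemma pig_ortho (g : DihedralGroup 3) : pig g * (pig g)ᵀ = 1 := by
  have v0 : (0:ZMod 3).val = 0 := rfl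
  have v1 : (1:ZMod 3).val = 1 := rfl
  have v2 : (2:ZMod 3).val = 2 := rfl
  cases g with
  | r i =>
    rcases zmod3_cases i with h|h|h <;> subst h <;>
      simp [pig, v0, v1, v2, pow_succ, pow_zero, transpose_mul, transpose_one,
        Smat, Tmat, hSt, hTt, mul_fin_three, one_fin_three] <;>
      (refine ⟨?_, ?_, ?_⟩ <;> funext b <;> fin_cases b <;> simp [vecMul, dotProduct, Fin.sum_univ_three])
  | sr i =>
    rcases zmod3_cases i with h|h|h <;> subst h <;>
      simp [pig, v0, v1, v2, pow_succ, pow_zero, transpose_mul, transpose_one,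
        Smat, Tmat, hSt, hTt, mul_fin_three, one_fin_three] <;>
      (refine ⟨?_, ?_, ?_⟩ <;> funext b <;> fin_cases b <;> simp [vecMul, dotProduct, Fin.sum_univ_three])

lemma conj_lemma (P A B : Matrix (Fin 3) (Fin 3) ℂ) :
    (P * A) * (P * B)ᵀ = P * (A * Bᵀ) * Pᵀ := by
  rw [transpose_mul]
  simp only [Matrix.mul_assoc]


lemma hpd0t : (!![1,0,0;0,0,0;0,0,0] : Matrix (Fin 3) (Fin 3) ℂ)ᵀ = !![1,0,0;0,0,0;0,0,0] := by
  ext i j; fin_cases i <;> fin_cases j <;> rfl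
lemma hpd1t : (!![0,0,0;0,0,0;0,0,1] : Matrix (Fin 3) (Fin 3) ℂ)ᵀ = !![0,0,0;0,0,0;0,0,1] := by
  ext i j; fin_cases i <;> fin_cases j <;> rfl
lemma hpd2t : (!![0,0,0;0,1,0;0,0,0] : Matrix (Fin 3) (Fin 3) ℂ)ᵀ = !![0,0,0;0,1,0;0,0,0] := by
  ext i j; fin_cases i <;> fin_cases j <;> rfl

lemma mulVec_sum (f : DihedralGroup 3 → Matrix (Fin 3 × Fin 3) (Fin 3 × Fin 3) ℂ)
    (v : Fin 3 × Fin 3 → ℂ) :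
    (∑ k : DihedralGroup 3, f k).mulVec v = ∑ k : DihedralGroup 3, (f k).mulVec v := by
  funext p
  simp only [mulVec, dotProduct, Matrix.sum_apply, Finset.sum_apply, Finset.sum_mul]
  rw [Finset.sum_comm]

/-- The key matrix identity. -/
lemma key (g h : DihedralGroup 3) :
    ∑ k : DihedralGroup 3, (pig g * pidual (k⁻¹ * h)) * (pig g * pidual k)ᵀ =
      (if h = 1 then (1 : ℂ) else 0) • 1 := by
  have hr0 : ∀ j : ZMod 3, pidual (.r j) = 0 := fun _ => rfl
  have hinv : ∀ j : ZMod 3, (DihedralGroup.sr j : DihedralGroup 3)⁻¹ = .sr j := fun _ => rfl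
  have hinvr : ∀ j : ZMod 3, (DihedralGroup.r j : DihedralGroup 3)⁻¹ = .r (-j) := fun _ => rfl
  rw [sum_dihedral]
  cases h with
  | sr m =>
    have h1 : (DihedralGroup.sr m : DihedralGroup 3) ≠ 1 := by
      rw [DihedralGroup.one_def]; exact fun hc => by cases hc
    simp [hr0, hinv, hinvr, h1, DihedralGroup.sr_mul_sr, DihedralGroup.r_mul_sr, show pidual 1 = 0 from rfl]
  | r m =>
    have expand : ∀ j : ZMod 3,
        (pig g * pidual ((DihedralGroup.sr j)⁻¹ * DihedralGroup.r m)) *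
          (pig g * pidual (.sr j))ᵀ =
        pig g * (pidual (.sr (j + m)) * (pidual (.sr j))ᵀ) * (pig g)ᵀ := by
      intro j
      rw [hinv, DihedralGroup.sr_mul_r, conj_lemma]
    rcases zmod3_cases m with h|h|h <;> subst h <;>
      simp only [hinvr, DihedralGroup.r_mul_r, hr0, Matrix.mul_zero, Matrix.zero_mul,
        transpose_zero, expand, zero_add, add_zero]
    · -- m = 0
      rw [if_pos (DihedralGroup.one_def (n := 3)).symm, one_smul,
        pd0, pd1, pd2, hpd0t, hpd1t, hpd2t,
        ← Matrix.add_mul, ← Matrix.add_mul, ← Matrix.mul_add, ← Matrix.mul_add]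
      have hsum : (!![1,0,0;0,0,0;0,0,0] : Matrix (Fin 3) (Fin 3) ℂ) * !![1,0,0;0,0,0;0,0,0]
          + !![0,0,0;0,0,0;0,0,1] * !![0,0,0;0,0,0;0,0,1]
          + !![0,0,0;0,1,0;0,0,0] * !![0,0,0;0,1,0;0,0,0] = 1 := by
        ext a b
        fin_cases a <;> fin_cases b <;>
          simp [Matrix.add_apply, mul_apply, Fin.sum_univ_three, Matrix.one_apply,
            Matrix.vecHead, Matrix.vecTail]
      rw [hsum, Matrix.mul_one, pig_ortho]
    · -- m = 1
      rw [show ((1:ZMod 3) + 1) = 2 from rfl,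
        show ((2:ZMod 3) + 1) = 0 from rfl, pd0, pd1, pd2, hpd0t, hpd1t, hpd2t]
      have z0 : (!![0,0,0;0,0,0;0,0,1] : Matrix (Fin 3) (Fin 3) ℂ) * !![1,0,0;0,0,0;0,0,0] = 0 := by
        ext a b
        fin_cases a <;> fin_cases b <;>
          simp [mul_apply, Fin.sum_univ_three, Matrix.zero_apply, Matrix.vecHead, Matrix.vecTail]
      have z1 : (!![0,0,0;0,1,0;0,0,0] : Matrix (Fin 3) (Fin 3) ℂ) * !![0,0,0;0,0,0;0,0,1] = 0 := by
        ext a b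
        fin_cases a <;> fin_cases b <;>
          simp [mul_apply, Fin.sum_univ_three, Matrix.zero_apply, Matrix.vecHead, Matrix.vecTail]
      have z2 : (!![1,0,0;0,0,0;0,0,0] : Matrix (Fin 3) (Fin 3) ℂ) * !![0,0,0;0,1,0;0,0,0] = 0 := by
        ext a b
        fin_cases a <;> fin_cases b <;>
          simp [mul_apply, Fin.sum_univ_three, Matrix.zero_apply, Matrix.vecHead, Matrix.vecTail]
      rw [z0, z1, z2]
      simp [show (DihedralGroup.r 1 : DihedralGroup 3) ≠ 1 by decide]
    · -- m = 2
      rw [show ((1:ZMod 3) + 2) = 0 from rfl,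
        show ((2:ZMod 3) + 2) = 1 from rfl, pd0, pd1, pd2, hpd0t, hpd1t, hpd2t]
      have z0 : (!![0,0,0;0,1,0;0,0,0] : Matrix (Fin 3) (Fin 3) ℂ) * !![1,0,0;0,0,0;0,0,0] = 0 := by
        ext a b
        fin_cases a <;> fin_cases b <;>
          simp [mul_apply, Fin.sum_univ_three, Matrix.zero_apply, Matrix.vecHead, Matrix.vecTail]
      have z1 : (!![1,0,0;0,0,0;0,0,0] : Matrix (Fin 3) (Fin 3) ℂ) * !![0,0,0;0,0,0;0,0,1] = 0 := by
        ext a b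
        fin_cases a <;> fin_cases b <;>
          simp [mul_apply, Fin.sum_univ_three, Matrix.zero_apply, Matrix.vecHead, Matrix.vecTail]
      have z2 : (!![0,0,0;0,0,0;0,0,1] : Matrix (Fin 3) (Fin 3) ℂ) * !![0,0,0;0,1,0;0,0,0] = 0 := by
        ext a b
        fin_cases a <;> fin_cases b <;>
          simp [mul_apply, Fin.sum_univ_three, Matrix.zero_apply, Matrix.vecHead, Matrix.vecTail]
      rw [z0, z1, z2]
      simp [show (DihedralGroup.r 2 : DihedralGroup 3) ≠ 1 by decide]

/-- s spans a trivial D(D₃)-module: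
Δ(g h*)·s = ε(g h*)·s where ε(g h*) = 1 if h = e and 0 otherwise. -/
theorem svec_trivial_module (g h : DihedralGroup 3) :
    (copr g h).mulVec svec = (if h = 1 then (1 : ℂ) else 0) • svec := by
  calc (copr g h).mulVec svec
      = ∑ k : DihedralGroup 3,
          ((pig g * pidual (k⁻¹ * h)) ⊗ₖ (pig g * pidual k)).mulVec svec := by
        rw [copr, mulVec_sum]
    _ = ∑ k : DihedralGroup 3,
          (fun p : Fin 3 × Fin 3 =>
            ((pig g * pidual (k⁻¹ * h)) * (pig g * pidual k)ᵀ) p.1 p.2) := by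
        simp only [kron_mulVec]
    _ = fun p : Fin 3 × Fin 3 =>
          (∑ k : DihedralGroup 3,
            (pig g * pidual (k⁻¹ * h)) * (pig g * pidual k)ᵀ) p.1 p.2 := by
        funext p
        rw [Finset.sum_apply, Matrix.sum_apply]
    _ = (if h = 1 then (1 : ℂ) else 0) • svec := by
        rw [key]
        funext p
        simp [svec, Matrix.smul_apply, Matrix.one_apply, smul_eq_mul]

end
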